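/- A social ranking solution R satisfies neutrality (NT), weak coalitional anonymity (WCA), the weak union very important person property (WUVIP), concatenation consistency (CCON), top-aligned consistency (TCON), and independence of the addition of the worst sets (IAWS) if and only if R equals the lex-cel solution R^L. -/

import Mathlib

namespace SocRank

/-- A coalitional ranking (a weak order on a set of feasible nonempty coalitions),
represented by its list of equivalence classes, listed from best to worst. -/
structure CoalRanking (X : Type*) where
  classes : List (Finset (Finset X))
  class_nonempty : ∀ C ∈ classes, C.Nonempty
  coal_nonempty : ∀ C ∈ classes, ∀ S ∈ C, S.Nonempty
  classes_disjoint : classes.Pairwise Disjoint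

namespace CoalRanking

variable {X : Type*}

/-- The coalition domain `𝒟(≿)` of a coalitional ranking. -/
def domain [DecidableEq X] (r : CoalRanking X) : Finset (Finset X) :=
  r.classes.foldr (· ∪ ·) ∅

/-- The list of equivalence classes of the restriction of a ranking to a set `D`
of coalitions. -/
def restrictClasses [DecidableEq X] (r : CoalRanking X) (D : Finset (Finset X)) :
    List (Finset (Finset X)) :=
  (r.classes.map (· ∩ D)).filter (fun C => decide C.Nonempty)

/-- Merging two lists of equivalence classes by aligning them at the top. -/
def zipUnion [DecidableEq X] :
    List (Finset (Finset X)) → List (Finset (Finset X)) → List (Finset (Finset X))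
  | [], M => M
  | L, [] => L
  | A :: L, B :: M => (A ∪ B) :: zipUnion L M

/-- `r` is a sum of the disjoint rankings `r₁` and `r₂`: its domain is the union of
the two domains and its restriction to the domain of `rᵢ` is `rᵢ`. -/
def IsSum [DecidableEq X] (r r₁ r₂ : CoalRanking X) : Prop :=
  Disjoint r₁.domain r₂.domain ∧
  r.domain = r₁.domain ∪ r₂.domain ∧
  r.restrictClasses r₁.domain = r₁.classes ∧
  r.restrictClasses r₂.domain = r₂.classes

/-- `r` is the concatenation sum `r₁ · r₂` of the disjoint rankings `r₁` and `r₂`. -/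
def IsConcatSum [DecidableEq X] (r r₁ r₂ : CoalRanking X) : Prop :=
  Disjoint r₁.domain r₂.domain ∧ r.classes = r₁.classes ++ r₂.classes

/-- `r` is the top-aligned sum `r₁ ⊨ r₂` of the disjoint rankings `r₁` and `r₂`. -/
def IsTopAlignedSum [DecidableEq X] (r r₁ r₂ : CoalRanking X) : Prop :=
  Disjoint r₁.domain r₂.domain ∧ r.classes = zipUnion r₁.classes r₂.classes

/-- `r` is the bottom-aligned sum `r₁ ⫤ r₂` of the disjoint rankings `r₁` and `r₂`. -/
def IsBottomAlignedSum [DecidableEq X] (r r₁ r₂ : CoalRanking X) : Prop :=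
  Disjoint r₁.domain r₂.domain ∧
  r.classes = (zipUnion r₁.classes.reverse r₂.classes.reverse).reverse

/-- Renaming the individuals of a coalitional ranking by a permutation `σ` of `X`:
the ranking `≿^σ`. -/
def mapPerm [DecidableEq X] (σ : Equiv.Perm X) (r : CoalRanking X) : CoalRanking X where
  classes := r.classes.map (fun C => C.image (fun S => S.image σ))
  class_nonempty := by
    intro C hC
    simp only [List.mem_map] at hC
    obtain ⟨C₀, hC₀, rfl⟩ := hC
    exact (r.class_nonempty C₀ hC₀).image _
  coal_nonempty := by
    intro C hC S hS
    simp only [List.mem_map] at hC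
    obtain ⟨C₀, hC₀, rfl⟩ := hC
    simp only [Finset.mem_image] at hS
    obtain ⟨S₀, hS₀, rfl⟩ := hS
    exact (r.coal_nonempty C₀ hC₀ S₀ hS₀).image _
  classes_disjoint := by
    refine List.Pairwise.map _ (fun {A B} h => ?_) r.classes_disjoint
    exact (Finset.disjoint_image
      (Finset.image_injective σ.injective)).mpr h

/-- Renaming the coalitions of a coalitional ranking by a permutation `π` of the set of
coalitions (mapping nonempty sets to nonempty sets): the ranking `≿_π`. -/
def mapCoalPerm [DecidableEq X] (π : Equiv.Perm (Finset X))
    (hπ : ∀ S : Finset X, S.Nonempty → (π S).Nonempty) (r : CoalRanking X) :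
    CoalRanking X where
  classes := r.classes.map (fun C => C.image π)
  class_nonempty := by
    intro C hC
    simp only [List.mem_map] at hC
    obtain ⟨C₀, hC₀, rfl⟩ := hC
    exact (r.class_nonempty C₀ hC₀).image _
  coal_nonempty := by
    intro C hC S hS
    simp only [List.mem_map] at hC
    obtain ⟨C₀, hC₀, rfl⟩ := hC
    simp only [Finset.mem_image] at hS
    obtain ⟨S₀, hS₀, rfl⟩ := hS
    exact hπ S₀ (r.coal_nonempty C₀ hC₀ S₀ hS₀)
  classes_disjoint := by
    refine List.Pairwise.map _ (fun {A B} h => ?_) r.classes_disjoint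
    exact (Finset.disjoint_image π.injective).mpr h

end CoalRanking

open CoalRanking

variable {X : Type*}

/-- A social ranking solution: a map assigning to every coalitional ranking a binary
relation on the individuals. -/
abbrev SRSMap (X : Type*) := CoalRanking X → X → X → Prop

/-- The symmetric part `I` of the social ranking. -/
def Ind (R : SRSMap X) (r : CoalRanking X) (x y : X) : Prop := R r x y ∧ R r y x

/-- The asymmetric part `P` of the social ranking. -/
def Pref (R : SRSMap X) (r : CoalRanking X) (x y : X) : Prop := R r x y ∧ ¬ R r y x

/-- Conditions (1)-(4) of consistency for the triple `(r₁, r₂, r)`. -/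
def ConsistentAt (R : SRSMap X) (r₁ r₂ r : CoalRanking X) : Prop :=
  ∀ x y : X,
    (Ind R r₁ x y → Ind R r₂ x y → Ind R r x y) ∧
    (Ind R r₁ x y → Pref R r₂ x y → Pref R r x y) ∧
    (Pref R r₁ x y → Ind R r₂ x y → Pref R r x y) ∧
    (Pref R r₁ x y → Pref R r₂ x y → Pref R r x y)

/-- Consistency (CON). -/
def CON [DecidableEq X] (R : SRSMap X) : Prop :=
  ∀ r₁ r₂ r : CoalRanking X, IsSum r r₁ r₂ → ConsistentAt R r₁ r₂ r

/-- Concatenation consistency (CCON). -/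
def CCON [DecidableEq X] (R : SRSMap X) : Prop :=
  ∀ r₁ r₂ r : CoalRanking X, IsConcatSum r r₁ r₂ → ConsistentAt R r₁ r₂ r

/-- Top-aligned consistency (TCON). -/
def TCON [DecidableEq X] (R : SRSMap X) : Prop :=
  ∀ r₁ r₂ r : CoalRanking X, IsTopAlignedSum r r₁ r₂ → ConsistentAt R r₁ r₂ r

/-- Bottom-aligned consistency (BCON). -/
def BCON [DecidableEq X] (R : SRSMap X) : Prop :=
  ∀ r₁ r₂ r : CoalRanking X, IsBottomAlignedSum r r₁ r₂ → ConsistentAt R r₁ r₂ r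

/-- II-concatenation consistency. -/
def IICCON [DecidableEq X] (R : SRSMap X) : Prop :=
  ∀ r₁ r₂ r : CoalRanking X, IsConcatSum r r₁ r₂ →
    ∀ x y : X, Ind R r₁ x y → Ind R r₂ x y → Ind R r x y

/-- IP-concatenation consistency. -/
def IPCCON [DecidableEq X] (R : SRSMap X) : Prop :=
  ∀ r₁ r₂ r : CoalRanking X, IsConcatSum r r₁ r₂ →
    ∀ x y : X, Ind R r₁ x y → Pref R r₂ x y → Pref R r x y

/-- PI-concatenation consistency. -/
def PICCON [DecidableEq X] (R : SRSMap X) : Prop :=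
  ∀ r₁ r₂ r : CoalRanking X, IsConcatSum r r₁ r₂ →
    ∀ x y : X, Pref R r₁ x y → Ind R r₂ x y → Pref R r x y

/-- PP-concatenation consistency. -/
def PPCCON [DecidableEq X] (R : SRSMap X) : Prop :=
  ∀ r₁ r₂ r : CoalRanking X, IsConcatSum r r₁ r₂ →
    ∀ x y : X, Pref R r₁ x y → Pref R r₂ x y → Pref R r x y

/-- `x_k`: the number of coalitions of the class `C` containing `x`. -/
def cnt [DecidableEq X] (x : X) (C : Finset (Finset X)) : ℕ :=
  (C.filter (fun S => x ∈ S)).card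

/-- The vector `θ_≿(x) = (x₁, …, x_l)`. -/
def theta [DecidableEq X] (r : CoalRanking X) (x : X) : List ℕ :=
  r.classes.map (cnt x)

/-- `sign`: `1` on positive numbers, `0` otherwise. -/
def sgn (n : ℕ) : ℕ := if 0 < n then 1 else 0

/-- The vector `θ̇_≿(x) = (sign(x₁), …, sign(x_l))`. -/
def thetaDot [DecidableEq X] (r : CoalRanking X) (x : X) : List ℕ :=
  (theta r x).map sgn

/-- The lexicographic order `≥^L` on vectors (of equal length). -/
def lexGE : List ℕ → List ℕ → Prop
  | _, [] => True
  | [], _ :: _ => False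
  | a :: as, b :: bs => b < a ∨ (a = b ∧ lexGE as bs)

/-- The lexicographic excellence solution (lex-cel) `R^L`. -/
def lexcel [DecidableEq X] : SRSMap X := fun r x y => lexGE (theta r x) (theta r y)

/-- The sign lexicographic excellence solution (S lex-cel) `R^{SL}`. -/
def slexcel [DecidableEq X] : SRSMap X := fun r x y => lexGE (thetaDot r x) (thetaDot r y)

/-- The plurality solution `R^P`. -/
def plurality [DecidableEq X] : SRSMap X := fun r x y =>
  (theta r y).headD 0 ≤ (theta r x).headD 0

/-- The sign plurality solution `R^{SP}`. -/
def splurality [DecidableEq X] : SRSMap X := fun r x y =>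
  sgn ((theta r y).headD 0) ≤ sgn ((theta r x).headD 0)

/-- The anti-plurality solution `R^{AP}`. -/
def antiplurality [DecidableEq X] : SRSMap X := fun r x y =>
  (theta r x).getLastD 0 ≤ (theta r y).getLastD 0

/-- `e_≿(x)`: the largest `k` such that `x` belongs to every coalition of each of the
first `k` equivalence classes. -/
def eIIS [DecidableEq X] (r : CoalRanking X) (x : X) : ℕ :=
  (r.classes.takeWhile (fun C => decide (∀ S ∈ C, x ∈ S))).length

/-- The intersection initial segment solution (IIS) `R^{IIS}`. -/
def iis [DecidableEq X] : SRSMap X := fun r x y => eIIS r y ≤ eIIS r x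

/-- The index of the equivalence class a coalition belongs to. -/
def classIdx [DecidableEq X] (r : CoalRanking X) (S : Finset X) : ℕ :=
  r.classes.findIdx (fun C => decide (S ∈ C))

/-- `C_{xy}`: the number of CP comparisons in favour of `x` against `y`. -/
def cpCount [DecidableEq X] [Fintype X] (r : CoalRanking X) (x y : X) : ℕ :=
  ((Finset.univ : Finset (Finset X)).filter (fun S =>
    S.Nonempty ∧ x ∉ S ∧ y ∉ S ∧ insert x S ∈ r.domain ∧ insert y S ∈ r.domain ∧
    classIdx r (insert x S) < classIdx r (insert y S))).card

/-- The Ceteris Paribus majority solution `R^{CPM}`. -/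
def cpm [DecidableEq X] [Fintype X] : SRSMap X := fun r x y =>
  cpCount r y x ≤ cpCount r x y

/-- Neutrality (NT). -/
def NT [DecidableEq X] (R : SRSMap X) : Prop :=
  ∀ (σ : Equiv.Perm X) (r : CoalRanking X) (x y : X),
    R (r.mapPerm σ) (σ x) (σ y) ↔ R r x y

/-- Weak coalitional anonymity (WCA). -/
def WCA [DecidableEq X] (R : SRSMap X) : Prop :=
  ∀ (x y : X) (π : Equiv.Perm (Finset X))
    (hπ : ∀ S : Finset X, S.Nonempty → (π S).Nonempty),
    (∀ S : Finset X, x ∈ S → x ∈ π S) → (∀ S : Finset X, y ∈ S → y ∈ π S) →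
    ∀ r : CoalRanking X,
      (R (r.mapCoalPerm π hπ) x y ↔ R r x y) ∧ (R (r.mapCoalPerm π hπ) y x ↔ R r y x)

/-- The weak union very important person property (WUVIP). -/
def WUVIP (R : SRSMap X) : Prop :=
  ∀ (r : CoalRanking X) (A B : Finset (Finset X)), r.classes = [A, B] →
    ∀ x y : X, (∃ S ∈ A, x ∈ S) → (∀ S ∈ A, y ∉ S) → Pref R r x y

/-- All indifference all winners (AIAW). -/
def AIAW [DecidableEq X] (R : SRSMap X) : Prop :=
  ∀ r : CoalRanking X, r.classes.length ≤ 1 →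
    (∀ x y : X, (∃ S ∈ r.domain, x ∈ S) → (∃ S ∈ r.domain, y ∈ S) → Ind R r x y) ∧
    (∀ x z : X, (∃ S ∈ r.domain, x ∈ S) → (∀ S ∈ r.domain, z ∉ S) → Pref R r x z)

/-- Independence of the decomposition of the worst sets (IDWS). -/
def IDWS [DecidableEq X] (R : SRSMap X) : Prop :=
  ∀ (r r' : CoalRanking X) (L G : List (Finset (Finset X))) (W : Finset (Finset X)),
    L ≠ [] → r.classes = L ++ [W] → r'.classes = L ++ G →
    G.foldr (· ∪ ·) ∅ = W →
    ∀ x y : X, Pref R r x y → Pref R r' x y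

/-- Independence of the addition of the worst sets (IAWS). -/
def IAWS [DecidableEq X] (R : SRSMap X) : Prop :=
  ∀ (r r' : CoalRanking X) (G : Finset (Finset X)),
    r'.classes = r.classes ++ [G] → (∀ S ∈ G, S ∉ r.domain) →
    ∀ x y : X, Pref R r x y → Pref R r' x y

/-- Tops-only (TO). -/
def TO (R : SRSMap X) : Prop :=
  ∀ (r r' : CoalRanking X) (A : Finset (Finset X)),
    r.classes.head? = some A → r'.classes.head? = some A → R r = R r'

/-- The dual S lex-cel `R^{DSL}`. -/
def dslexcel [DecidableEq X] : SRSMap X := fun r x y =>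
  lexGE ((thetaDot r y).reverse) ((thetaDot r x).reverse)

/-- The inverse dual S lex-cel `R^{IDSL}`. -/
def idslexcel [DecidableEq X] : SRSMap X := fun r x y => dslexcel r y x

/-- The vector `θ̃_≿(x)` used by the S lex-cel with precedence on unanimity. -/
def tildeTheta [DecidableEq X] (r : CoalRanking X) (x : X) : List ℕ :=
  r.classes.map (fun C => if cnt x C = C.card then 2 else if 0 < cnt x C then 1 else 0)

/-- The S lex-cel with a particular precedence on unanimity `R^{SLUN}`. -/
def slun [DecidableEq X] : SRSMap X := fun r x y =>
  lexGE (tildeTheta r x) (tildeTheta r y)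

/-- The S sum score `Σ_k sign(x_k)`. -/
def ssum [DecidableEq X] (r : CoalRanking X) (x : X) : ℕ := (thetaDot r x).sum

/-- The S sum rule with tie-breaking by S lex-cel `R^{SSUM,SL}`. -/
def ssumSL [DecidableEq X] : SRSMap X := fun r x y =>
  ssum r y < ssum r x ∨ (ssum r x = ssum r y ∧ slexcel r x y)

end SocRank

open SocRank

namespace SocRank

lemma lexGE_refl : ∀ a : List ℕ, lexGE a a
  | [] => trivial
  | _ :: as => Or.inr ⟨rfl, lexGE_refl as⟩

lemma lexGE_total : ∀ {a b : List ℕ}, a.length = b.length → lexGE a b ∨ lexGE b a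
  | [], [], _ => Or.inl trivial
  | a :: as, b :: bs, h => by
    rcases lt_trichotomy a b with hab | hab | hab
    · exact Or.inr (Or.inl hab)
    · rcases lexGE_total (by simpa using h) with h' | h'
      · exact Or.inl (Or.inr ⟨hab, h'⟩)
      · exact Or.inr (Or.inr ⟨hab.symm, h'⟩)
    · exact Or.inl (Or.inl hab)

lemma lexGE_antisymm : ∀ {a b : List ℕ}, a.length = b.length →
    lexGE a b → lexGE b a → a = b
  | [], [], _, _, _ => rfl
  | a :: as, b :: bs, h, hab, hba => by
    rcases hab with hab | ⟨hab, hab'⟩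
    · rcases hba with hba | ⟨hba, _⟩
      · exact absurd hba (lt_asymm hab)
      · exact absurd hab (by simp [hba])
    · rcases hba with hba | ⟨hba, hba'⟩
      · exact absurd hba (by simp [hab])
      · rw [hab, lexGE_antisymm (by simpa using h) hab' hba']

/-- strict lexicographic dominance -/
def sLex (a b : List ℕ) : Prop := lexGE a b ∧ a ≠ b

lemma not_lexGE_iff {a b : List ℕ} (h : a.length = b.length) :
    ¬ lexGE b a ↔ sLex a b := by
  constructor
  · intro hn
    rcases lexGE_total h with h' | h'
    · exact ⟨h', fun he => hn (he ▸ lexGE_refl a)⟩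
    · exact absurd h' hn
  · rintro ⟨h1, h2⟩ h3
    exact h2 (lexGE_antisymm h h1 h3)

lemma lexGE_append_left : ∀ (c a b : List ℕ),
    lexGE (c ++ a) (c ++ b) ↔ lexGE a b
  | [], a, b => Iff.rfl
  | x :: c, a, b => by
    show (x < x ∨ (x = x ∧ lexGE (c ++ a) (c ++ b))) ↔ _
    simp [lexGE_append_left c a b]

lemma sLex_append : ∀ {a₁ b₁ : List ℕ} (a₂ b₂ : List ℕ), a₁.length = b₁.length →
    sLex a₁ b₁ → sLex (a₁ ++ a₂) (b₁ ++ b₂)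
  | [], [], _, _, _, h => absurd rfl h.2
  | a :: as, b :: bs, a₂, b₂, hl, ⟨h1, h2⟩ => by
    rcases h1 with h1 | ⟨h1, h1'⟩
    · exact ⟨Or.inl h1, by simp [List.cons_append]; intro he; exact absurd he (ne_of_gt h1)⟩
    · subst h1
      have hne : as ≠ bs := fun he => h2 (by rw [he])
      have := sLex_append a₂ b₂ (by simpa using hl) ⟨h1', hne⟩
      exact ⟨Or.inr ⟨rfl, this.1⟩, by
        simp only [List.cons_append, ne_eq, List.cons.injEq, not_and]
        intro _ he; exact this.2 he⟩

lemma lex_trichotomy {a b : List ℕ} (h : a.length = b.length) :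
    a = b ∨ sLex a b ∨ sLex b a := by
  by_cases he : a = b
  · exact Or.inl he
  rcases lexGE_total h with h' | h'
  · exact Or.inr (Or.inl ⟨h', he⟩)
  · exact Or.inr (Or.inr ⟨h', Ne.symm he⟩)

/-- pointwise sum with padding, same shape as `zipUnion`. -/
def padAdd : List ℕ → List ℕ → List ℕ
  | [], m => m
  | l, [] => l
  | a :: l, b :: m => (a + b) :: padAdd l m

@[simp] lemma padAdd_nil_left (m : List ℕ) : padAdd [] m = m := by cases m <;> rfl
@[simp] lemma padAdd_nil_right (l : List ℕ) : padAdd l [] = l := by cases l <;> rfl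
@[simp] lemma padAdd_cons (a b : ℕ) (l m : List ℕ) :
    padAdd (a :: l) (b :: m) = (a + b) :: padAdd l m := rfl

lemma padAdd_lexGE : ∀ {a₁ b₁ : List ℕ}, a₁.length = b₁.length →
    ∀ {a₂ b₂ : List ℕ}, a₂.length = b₂.length →
    lexGE a₁ b₁ → lexGE a₂ b₂ → lexGE (padAdd a₁ a₂) (padAdd b₁ b₂)
  | [], [], _, a₂, b₂, h₂, _, g₂ => by simpa using g₂
  | a :: as, b :: bs, h₁, [], [], _, g₁, _ => by simpa using g₁
  | a :: as, b :: bs, h₁, c :: cs, d :: ds, h₂, g₁, g₂ => by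
    have hd : d ≤ c := by rcases g₂ with h | ⟨h, _⟩ <;> omega
    rcases g₁ with h | ⟨h, h'⟩
    · exact Or.inl (by omega)
    · subst h
      rcases g₂ with hg | ⟨hg, hg'⟩
      · exact Or.inl (by omega)
      · subst hg
        exact Or.inr ⟨rfl, padAdd_lexGE (by simpa using h₁) (by simpa using h₂) h' hg'⟩

lemma padAdd_eq_split : ∀ {a₁ b₁ : List ℕ}, a₁.length = b₁.length →
    ∀ {a₂ b₂ : List ℕ}, a₂.length = b₂.length →
    lexGE a₁ b₁ → lexGE a₂ b₂ → padAdd a₁ a₂ = padAdd b₁ b₂ → a₁ = b₁ ∧ a₂ = b₂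
  | [], [], _, a₂, b₂, h₂, _, g₂, he => ⟨rfl, by simpa using he⟩
  | a :: as, b :: bs, h₁, [], [], _, g₁, _, he => ⟨by simpa using he, rfl⟩
  | a :: as, b :: bs, h₁, c :: cs, d :: ds, h₂, g₁, g₂, he => by
    simp only [padAdd_cons, List.cons.injEq] at he
    have hb : b ≤ a := by rcases g₁ with h | ⟨h, _⟩ <;> omega
    have hd : d ≤ c := by rcases g₂ with h | ⟨h, _⟩ <;> omega
    have hab : a = b := by omega
    have hcd : c = d := by omega
    subst hab; subst hcd
    have g₁' : lexGE as bs := by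
      rcases g₁ with h | ⟨_, h⟩
      · exact absurd h (lt_irrefl _)
      · exact h
    have g₂' : lexGE cs ds := by
      rcases g₂ with h | ⟨_, h⟩
      · exact absurd h (lt_irrefl _)
      · exact h
    have := padAdd_eq_split (by simpa using h₁) (by simpa using h₂) g₁' g₂' he.2
    exact ⟨by rw [this.1], by rw [this.2]⟩

lemma padAdd_length : ∀ (a b : List ℕ), (padAdd a b).length = max a.length b.length
  | [], m => by simp
  | a :: l, [] => by simp
  | a :: l, b :: m => by simp [padAdd_length l m]

lemma sLex_map_decomp {α : Type*} (f g : α → ℕ) :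
    ∀ L : List α, sLex (L.map f) (L.map g) →
    ∃ L₁ C L₂, L = L₁ ++ C :: L₂ ∧ (∀ D ∈ L₁, f D = g D) ∧ g C < f C
  | [], h => absurd rfl h.2
  | C :: L, ⟨h1, h2⟩ => by
    rcases h1 with h1 | ⟨h1, h1'⟩
    · exact ⟨[], C, L, rfl, by simp, h1⟩
    · have hne : L.map f ≠ L.map g := by
        intro he; exact h2 (by simp [he, h1])
      obtain ⟨L₁, D, L₂, hL, hall, hD⟩ := sLex_map_decomp f g L ⟨h1', hne⟩
      exact ⟨C :: L₁, D, L₂, by rw [hL]; rfl, by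
        intro E hE
        rcases List.mem_cons.1 hE with rfl | hE
        · exact h1
        · exact hall E hE, hD⟩

end SocRank

namespace SocRank

variable {X : Type*} [DecidableEq X]

lemma CoalRanking.ext' {r₁ r₂ : CoalRanking X} (h : r₁.classes = r₂.classes) :
    r₁ = r₂ := by
  cases r₁; cases r₂; cases h; rfl

lemma mem_foldr_union {L : List (Finset (Finset X))} {S : Finset X} :
    S ∈ L.foldr (· ∪ ·) ∅ ↔ ∃ C ∈ L, S ∈ C := by
  induction L with
  | nil => simp
  | cons C L ih => simp [ih]

lemma mem_domain {r : CoalRanking X} {S : Finset X} :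
    S ∈ r.domain ↔ ∃ C ∈ r.classes, S ∈ C := mem_foldr_union

lemma subset_domain {r : CoalRanking X} {C : Finset (Finset X)}
    (h : C ∈ r.classes) : C ⊆ r.domain :=
  fun S hS => mem_domain.2 ⟨C, h, hS⟩

lemma disjoint_foldr_union {L₁ L₂ : List (Finset (Finset X))}
    (h : ∀ C ∈ L₁, ∀ D ∈ L₂, Disjoint C D) :
    Disjoint (L₁.foldr (· ∪ ·) ∅) (L₂.foldr (· ∪ ·) ∅) := by
  rw [Finset.disjoint_left]
  intro S h1 h2
  obtain ⟨C, hC, hSC⟩ := mem_foldr_union.1 h1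
  obtain ⟨D, hD, hSD⟩ := mem_foldr_union.1 h2
  exact Finset.disjoint_left.1 (h C hC D hD) hSC hSD

lemma cnt_union {x : X} {A B : Finset (Finset X)} (h : Disjoint A B) :
    cnt x (A ∪ B) = cnt x A + cnt x B := by
  unfold cnt
  rw [Finset.filter_union, Finset.card_union_of_disjoint
    (Finset.disjoint_filter_filter h)]

lemma cnt_pos {x : X} {C : Finset (Finset X)} (h : ∃ S ∈ C, x ∈ S) :
    0 < cnt x C := by
  obtain ⟨S, hS, hx⟩ := h
  exact Finset.card_pos.2 ⟨S, Finset.mem_filter.2 ⟨hS, hx⟩⟩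

lemma cnt_eq_zero {x : X} {C : Finset (Finset X)} (h : ∀ S ∈ C, x ∉ S) :
    cnt x C = 0 := by
  unfold cnt
  rw [Finset.card_eq_zero, Finset.filter_eq_empty_iff]
  exact h

@[simp] lemma theta_length (r : CoalRanking X) (x : X) :
    (theta r x).length = r.classes.length := List.length_map _

lemma theta_len_eq (r : CoalRanking X) (x y : X) :
    (theta r x).length = (theta r y).length := by simp

lemma lexcel_ind_iff {r : CoalRanking X} {x y : X} :
    Ind (lexcel) r x y ↔ theta r x = theta r y := by
  constructor
  · rintro ⟨h1, h2⟩
    exact lexGE_antisymm (theta_len_eq r x y) h1 h2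
  · intro h
    constructor <;> · show lexGE _ _; rw [h]; exact lexGE_refl _

lemma lexcel_pref_iff {r : CoalRanking X} {x y : X} :
    Pref (lexcel) r x y ↔ sLex (theta r x) (theta r y) := by
  unfold Pref lexcel
  rw [not_lexGE_iff (theta_len_eq r x y)]
  constructor
  · exact fun h => h.2
  · exact fun h => ⟨h.1, h⟩

lemma filter_image {α β : Type*} [DecidableEq α] [DecidableEq β]
    (f : α → β) (hf : Function.Injective f) (s : Finset α) (p : β → Prop)
    [DecidablePred p] :
    (s.image f).filter p = (s.filter (fun a => p (f a))).image f := by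
  ext b
  simp only [Finset.mem_filter, Finset.mem_image]
  constructor
  · rintro ⟨⟨a, ha, rfl⟩, hp⟩
    exact ⟨a, ⟨ha, hp⟩, rfl⟩
  · rintro ⟨a, ⟨ha, hp⟩, rfl⟩
    exact ⟨⟨a, ha, rfl⟩, hp⟩

lemma cnt_image {x : X} (π : Finset X → Finset X) (hπ : Function.Injective π)
    (hmem : ∀ S, x ∈ π S ↔ x ∈ S) (C : Finset (Finset X)) :
    cnt x (C.image π) = cnt x C := by
  unfold cnt
  rw [filter_image π hπ C _]
  rw [Finset.card_image_of_injective _ hπ]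
  congr 1
  exact Finset.filter_congr (fun S _ => by simp [hmem S])

lemma cnt_image_perm (σ : Equiv.Perm X) (x : X) (C : Finset (Finset X)) :
    cnt (σ x) (C.image (fun S => S.image σ)) = cnt x C := by
  have hinj : Function.Injective (fun S : Finset X => S.image σ) :=
    Finset.image_injective σ.injective
  unfold cnt
  rw [filter_image _ hinj C _, Finset.card_image_of_injective _ hinj]
  congr 1
  refine Finset.filter_congr (fun S _ => ?_)
  simp [Finset.mem_image, σ.injective.eq_iff]

lemma theta_mapPerm (σ : Equiv.Perm X) (r : CoalRanking X) (x : X) :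
    theta (r.mapPerm σ) (σ x) = theta r x := by
  show (r.classes.map _).map _ = _
  rw [List.map_map]
  exact List.map_congr_left (fun C _ => cnt_image_perm σ x C)

lemma theta_mapCoalPerm (π : Equiv.Perm (Finset X))
    (hπ : ∀ S : Finset X, S.Nonempty → (π S).Nonempty)
    {x : X} (hmem : ∀ S, x ∈ π S ↔ x ∈ S) (r : CoalRanking X) :
    theta (r.mapCoalPerm π hπ) x = theta r x := by
  show (r.classes.map _).map _ = _
  rw [List.map_map]
  exact List.map_congr_left (fun C _ => cnt_image (⇑π) π.injective hmem C)

lemma perm_mem_iff_of_forall {X : Type*} [DecidableEq X] [Fintype X]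
    (π : Equiv.Perm (Finset X)) {x : X} (hx : ∀ S : Finset X, x ∈ S → x ∈ π S) :
    ∀ S, x ∈ π S ↔ x ∈ S := by
  classical
  set P : Finset (Finset X) := Finset.univ.filter (fun S => x ∈ S) with hP
  have hsub : P.image π ⊆ P := by
    intro T hT
    obtain ⟨S, hS, rfl⟩ := Finset.mem_image.1 hT
    simp only [hP, Finset.mem_filter, Finset.mem_univ, true_and] at hS ⊢
    exact hx S hS
  have heq : P.image π = P :=
    Finset.eq_of_subset_of_card_le hsub
      (le_of_eq (Finset.card_image_of_injective _ π.injective).symm)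
  intro S
  refine ⟨fun h => ?_, hx S⟩
  have : π S ∈ P := by simp [hP, h]
  rw [← heq] at this
  obtain ⟨S', hS', hSS⟩ := Finset.mem_image.1 this
  have : S' = S := π.injective hSS
  subst this
  simpa [hP] using hS'

lemma map_cnt_zipUnion (x : X) :
    ∀ (L M : List (Finset (Finset X))), (∀ A ∈ L, ∀ B ∈ M, Disjoint A B) →
    (CoalRanking.zipUnion L M).map (cnt x) = padAdd (L.map (cnt x)) (M.map (cnt x))
  | [], M, _ => by simp [CoalRanking.zipUnion]
  | A :: L, [], _ => by simp [CoalRanking.zipUnion]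
  | A :: L, B :: M, h => by
    simp only [CoalRanking.zipUnion, List.map_cons, padAdd_cons]
    rw [cnt_union (h A (by simp) B (by simp))]
    rw [map_cnt_zipUnion x L M (fun A' hA B' hB => h A' (by simp [hA]) B' (by simp [hB]))]

lemma theta_of_topAligned {r r₁ r₂ : CoalRanking X}
    (h : CoalRanking.IsTopAlignedSum r r₁ r₂) (x : X) :
    theta r x = padAdd (theta r₁ x) (theta r₂ x) := by
  obtain ⟨hdisj, hcl⟩ := h
  have hpair : ∀ A ∈ r₁.classes, ∀ B ∈ r₂.classes, Disjoint A B := by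
    intro A hA B hB
    exact Finset.disjoint_of_subset_left (subset_domain hA)
      (Finset.disjoint_of_subset_right (subset_domain hB) hdisj)
  show r.classes.map _ = _
  rw [hcl]
  exact map_cnt_zipUnion x _ _ hpair

lemma theta_of_concat {r r₁ r₂ : CoalRanking X}
    (h : CoalRanking.IsConcatSum r r₁ r₂) (x : X) :
    theta r x = theta r₁ x ++ theta r₂ x := by
  show r.classes.map _ = _
  rw [h.2, List.map_append]
  rfl

end SocRank




namespace SocRank

lemma perm_support_mem {α : Type*} [DecidableEq α] (π : Equiv.Perm α)
    (T : Finset α) (h : ∀ a ∉ T, π a = a) : ∀ a ∈ T, π a ∈ T := by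
  intro a ha
  by_contra hn
  have h2 : π (π a) = π a := h _ hn
  exact hn ((π.injective h2).symm ▸ ha)

lemma pres_of_const {α : Type*} [DecidableEq α] {π : Equiv.Perm α} {T : Finset α}
    (hsup : ∀ a ∉ T, π a = a) {q : α → Prop}
    (hq : (∀ a ∈ T, q a) ∨ (∀ a ∈ T, ¬ q a)) : ∀ a, q a → q (π a) := by
  intro a hqa
  by_cases ha : a ∈ T
  · rcases hq with hq | hq
    · exact hq _ (perm_support_mem π T hsup a ha)
    · exact absurd hqa (hq a ha)
  · rw [hsup a ha]; exact hqa

lemma exists_perm_image {α : Type*} [DecidableEq α] :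
    ∀ (n : ℕ) (T A B : Finset α), (A \ B).card = n → A ⊆ T → B ⊆ T →
    A.card = B.card →
    ∃ π : Equiv.Perm α, (∀ a ∉ T, π a = a) ∧ A.image π = B := by
  intro n
  induction n with
  | zero =>
    intro T A B h hA hB hcard
    have hsub : A ⊆ B := by
      rw [← Finset.sdiff_eq_empty_iff_subset]
      exact Finset.card_eq_zero.1 h
    have : A = B := Finset.eq_of_subset_of_card_le hsub (le_of_eq hcard.symm)
    exact ⟨Equiv.refl α, fun a _ => rfl, by simpa using this⟩
  | succ n ih =>
    intro T A B h hA hB hcard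
    have hABne : (A \ B).Nonempty := Finset.card_pos.1 (by omega)
    have hBAcard : (B \ A).card = n + 1 := by
      rw [Finset.card_sdiff_comm hcard.symm, h]
    have hBAne : (B \ A).Nonempty := Finset.card_pos.1 (by omega)
    obtain ⟨a, ha⟩ := hABne
    obtain ⟨b, hb⟩ := hBAne
    rw [Finset.mem_sdiff] at ha hb
    have hbA : b ∉ A.erase a := fun hc => hb.2 (Finset.mem_of_mem_erase hc)
    set A' := insert b (A.erase a) with hA'
    have hA'card : A'.card = A.card := by
      rw [hA', Finset.card_insert_of_notMem hbA, Finset.card_erase_of_mem ha.1]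
      have : 0 < A.card := Finset.card_pos.2 ⟨a, ha.1⟩
      omega
    have hA'T : A' ⊆ T := by
      rw [hA']
      exact Finset.insert_subset (hB hb.1)
        (Finset.Subset.trans (Finset.erase_subset _ _) hA)
    have hA'B : A' \ B = (A \ B).erase a := by
      ext c
      simp only [hA', Finset.mem_sdiff, Finset.mem_erase, Finset.mem_insert]
      constructor
      · rintro ⟨rfl | ⟨hca, hcA⟩, hcB⟩
        · exact absurd hb.1 hcB
        · exact ⟨hca, hcA, hcB⟩
      · rintro ⟨hca, hcA, hcB⟩
        exact ⟨Or.inr ⟨hca, hcA⟩, hcB⟩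
    have hcard' : (A' \ B).card = n := by
      rw [hA'B, Finset.card_erase_of_mem (Finset.mem_sdiff.2 ha), h]
      omega
    obtain ⟨π', hπ'1, hπ'2⟩ := ih T A' B hcard' hA'T hB (hA'card.trans hcard)
    refine ⟨(Equiv.swap a b).trans π', ?_, ?_⟩
    · intro c hc
      have hca : c ≠ a := fun hc' => hc (hc' ▸ hA ha.1)
      have hcb : c ≠ b := fun hc' => hc (hc' ▸ hB hb.1)
      show π' (Equiv.swap a b c) = c
      rw [Equiv.swap_apply_of_ne_of_ne hca hcb]
      exact hπ'1 c hc
    · have himg : A.image (Equiv.swap a b) = A' := by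
        apply Finset.Subset.antisymm
        · intro c hc
          obtain ⟨d, hd, rfl⟩ := Finset.mem_image.1 hc
          by_cases hda : d = a
          · subst hda
            rw [Equiv.swap_apply_left]
            exact Finset.mem_insert_self _ _
          · have hdb : d ≠ b := fun h' => hb.2 (h' ▸ hd)
            rw [Equiv.swap_apply_of_ne_of_ne hda hdb]
            exact Finset.mem_insert_of_mem (Finset.mem_erase.2 ⟨hda, hd⟩)
        · intro c hc
          rcases Finset.mem_insert.1 hc with rfl | hc
          · exact Finset.mem_image.2 ⟨a, ha.1, Equiv.swap_apply_left a c⟩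
          · rw [Finset.mem_erase] at hc
            refine Finset.mem_image.2 ⟨c, hc.2, ?_⟩
            exact Equiv.swap_apply_of_ne_of_ne hc.1 (fun h' => hb.2 (h' ▸ hc.2))
      have : A.image ((Equiv.swap a b).trans π') = (A.image (Equiv.swap a b)).image π' := by
        rw [Finset.image_image]
        rfl
      rw [this, himg, hπ'2]

end SocRank

namespace SocRank

variable {X : Type*} [DecidableEq X]

lemma mem_image_perm {σ : Equiv.Perm X} {z : X} {S : Finset X} :
    z ∈ S.image σ ↔ σ.symm z ∈ S := by
  constructor
  · intro h
    obtain ⟨s, hs, rfl⟩ := Finset.mem_image.1 h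
    simpa using hs
  · intro h
    exact Finset.mem_image.2 ⟨σ.symm z, h, by simp⟩

lemma fiximg (π : Equiv.Perm (Finset X)) (T D : Finset (Finset X))
    (hsup : ∀ S ∉ T, π S = S) (hD : ∀ S ∈ D, S ∉ T) : D.image π = D := by
  have h : D.image ⇑π = D.image id :=
    Finset.image_congr (fun S hS => hsup S (hD S hS))
  rw [h, Finset.image_id]

lemma exists_sym_perm [Fintype X] {x y : X} (hxy : x ≠ y) (C : Finset (Finset X))
    (hCne : ∀ S ∈ C, S.Nonempty) (hcnt : cnt x C = cnt y C) :
    ∃ π : Equiv.Perm (Finset X),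
      (∀ S : Finset X, x ∈ S → x ∈ π S) ∧ (∀ S : Finset X, y ∈ S → y ∈ π S) ∧
      (∀ S : Finset X, S.Nonempty → (π S).Nonempty) ∧
      (C.image (fun S => S.image (Equiv.swap x y))).image π = C := by
  classical
  set σ := Equiv.swap x y with hσ
  set τ := fun S : Finset X => S.image σ with hτ
  have hτinj : Function.Injective τ := Finset.image_injective σ.injective
  have hxm : ∀ S : Finset X, x ∈ τ S ↔ y ∈ S := by
    intro S
    rw [hτ]
    show x ∈ S.image σ ↔ _
    rw [mem_image_perm, hσ, Equiv.symm_swap, Equiv.swap_apply_left]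
  have hym : ∀ S : Finset X, y ∈ τ S ↔ x ∈ S := by
    intro S
    rw [hτ]
    show y ∈ S.image σ ↔ _
    rw [mem_image_perm, hσ, Equiv.symm_swap, Equiv.swap_apply_right]
  set C' := C.image τ with hC'
  have hC'ne : ∀ S ∈ C', S.Nonempty := by
    intro S hS
    obtain ⟨S₀, hS₀, rfl⟩ := Finset.mem_image.1 hS
    exact (hCne S₀ hS₀).image _
  -- the four pieces
  set A₁ := C'.filter (fun S => x ∈ S ∧ y ∈ S) with hA₁d
  set A₂ := C'.filter (fun S => x ∈ S ∧ y ∉ S) with hA₂d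
  set A₃ := C'.filter (fun S => y ∈ S ∧ x ∉ S) with hA₃d
  set A₄ := C'.filter (fun S => x ∉ S ∧ y ∉ S) with hA₄d
  set B₁ := C.filter (fun S => x ∈ S ∧ y ∈ S) with hB₁d
  set B₂ := C.filter (fun S => x ∈ S ∧ y ∉ S) with hB₂d
  set B₃ := C.filter (fun S => y ∈ S ∧ x ∉ S) with hB₃d
  set B₄ := C.filter (fun S => x ∉ S ∧ y ∉ S) with hB₄d
  have hA₁ : A₁ = B₁.image τ := by
    rw [hA₁d, hC', filter_image τ hτinj, hB₁d]
    congr 1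
    refine Finset.filter_congr (fun S _ => ?_)
    rw [hxm, hym]
    exact and_comm
  have hA₂ : A₂ = B₃.image τ := by
    rw [hA₂d, hC', filter_image τ hτinj, hB₃d]
    congr 1
    refine Finset.filter_congr (fun S _ => ?_)
    rw [hxm, hym]
  have hA₃ : A₃ = B₂.image τ := by
    rw [hA₃d, hC', filter_image τ hτinj, hB₂d]
    congr 1
    refine Finset.filter_congr (fun S _ => ?_)
    rw [hxm, hym]
  have hA₄ : A₄ = B₄.image τ := by
    rw [hA₄d, hC', filter_image τ hτinj, hB₄d]
    congr 1
    refine Finset.filter_congr (fun S _ => ?_)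
    rw [hxm, hym]
    exact and_comm
  -- the count identity
  have hkey : B₂.card = B₃.card := by
    have e1 : (C.filter (fun S => x ∈ S)).card = B₁.card + B₂.card := by
      rw [hB₁d, hB₂d, ← Finset.filter_filter, ← Finset.filter_filter]
      exact (Finset.card_filter_add_card_filter_not
        (s := C.filter (fun S => x ∈ S)) (p := fun S => y ∈ S)).symm
    have e2 : (C.filter (fun S => y ∈ S)).card = B₁.card + B₃.card := by
      have : (C.filter (fun S => y ∈ S)).filter (fun S => x ∈ S) = B₁ := by
        rw [Finset.filter_filter, hB₁d]
        exact Finset.filter_congr (fun S _ => and_comm)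
      rw [hB₃d, ← this, ← Finset.filter_filter]
      exact (Finset.card_filter_add_card_filter_not
        (s := C.filter (fun S => y ∈ S)) (p := fun S => x ∈ S)).symm
    have : cnt x C = cnt y C := hcnt
    unfold cnt at this
    omega
  -- cardinalities
  have c₁ : A₁.card = B₁.card := by rw [hA₁, Finset.card_image_of_injective _ hτinj]
  have c₂ : A₂.card = B₂.card := by
    rw [hA₂, Finset.card_image_of_injective _ hτinj, hkey]
  have c₃ : A₃.card = B₃.card := by
    rw [hA₃, Finset.card_image_of_injective _ hτinj, ← hkey]
  have c₄ : A₄.card = B₄.card := by rw [hA₄, Finset.card_image_of_injective _ hτinj]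
  -- the four supports
  set T₁ := Finset.univ.filter (fun S : Finset X => x ∈ S ∧ y ∈ S) with hT₁d
  set T₂ := Finset.univ.filter (fun S : Finset X => x ∈ S ∧ y ∉ S) with hT₂d
  set T₃ := Finset.univ.filter (fun S : Finset X => y ∈ S ∧ x ∉ S) with hT₃d
  set T₄ := Finset.univ.filter
    (fun S : Finset X => x ∉ S ∧ y ∉ S ∧ S.Nonempty) with hT₄d
  have hmT₁ : ∀ S : Finset X, S ∈ T₁ ↔ (x ∈ S ∧ y ∈ S) := by
    intro S; rw [hT₁d]; simp
  have hmT₂ : ∀ S : Finset X, S ∈ T₂ ↔ (x ∈ S ∧ y ∉ S) := by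
    intro S; rw [hT₂d]; simp
  have hmT₃ : ∀ S : Finset X, S ∈ T₃ ↔ (y ∈ S ∧ x ∉ S) := by
    intro S; rw [hT₃d]; simp
  have hmT₄ : ∀ S : Finset X, S ∈ T₄ ↔ (x ∉ S ∧ y ∉ S ∧ S.Nonempty) := by
    intro S; rw [hT₄d]; simp
  obtain ⟨π₁, hsup₁, himg₁⟩ := exists_perm_image (A₁ \ B₁).card T₁ A₁ B₁ rfl
    (fun S hS => (hmT₁ S).2 (Finset.mem_filter.1 hS).2)
    (fun S hS => (hmT₁ S).2 (Finset.mem_filter.1 hS).2) c₁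
  obtain ⟨π₂, hsup₂, himg₂⟩ := exists_perm_image (A₂ \ B₂).card T₂ A₂ B₂ rfl
    (fun S hS => (hmT₂ S).2 (Finset.mem_filter.1 hS).2)
    (fun S hS => (hmT₂ S).2 (Finset.mem_filter.1 hS).2) c₂
  obtain ⟨π₃, hsup₃, himg₃⟩ := exists_perm_image (A₃ \ B₃).card T₃ A₃ B₃ rfl
    (fun S hS => (hmT₃ S).2 (Finset.mem_filter.1 hS).2)
    (fun S hS => (hmT₃ S).2 (Finset.mem_filter.1 hS).2) c₃
  obtain ⟨π₄, hsup₄, himg₄⟩ := exists_perm_image (A₄ \ B₄).card T₄ A₄ B₄ rfl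
    (fun S hS => by
      have h' := Finset.mem_filter.1 hS
      exact (hmT₄ S).2 ⟨h'.2.1, h'.2.2, hC'ne S h'.1⟩)
    (fun S hS => by
      have h' := Finset.mem_filter.1 hS
      exact (hmT₄ S).2 ⟨h'.2.1, h'.2.2, hCne S h'.1⟩) c₄
  refine ⟨((π₄.trans π₃).trans π₂).trans π₁, ?_, ?_, ?_, ?_⟩
  · -- x preservation
    intro S hS
    have p4 : ∀ S, x ∈ S → x ∈ π₄ S := pres_of_const hsup₄
      (Or.inr (fun S hS => ((hmT₄ S).1 hS).1))
    have p3 : ∀ S, x ∈ S → x ∈ π₃ S := pres_of_const hsup₃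
      (Or.inr (fun S hS => ((hmT₃ S).1 hS).2))
    have p2 : ∀ S, x ∈ S → x ∈ π₂ S := pres_of_const hsup₂
      (Or.inl (fun S hS => ((hmT₂ S).1 hS).1))
    have p1 : ∀ S, x ∈ S → x ∈ π₁ S := pres_of_const hsup₁
      (Or.inl (fun S hS => ((hmT₁ S).1 hS).1))
    exact p1 _ (p2 _ (p3 _ (p4 _ hS)))
  · -- y preservation
    intro S hS
    have p4 : ∀ S, y ∈ S → y ∈ π₄ S := pres_of_const hsup₄
      (Or.inr (fun S hS => ((hmT₄ S).1 hS).2.1))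
    have p3 : ∀ S, y ∈ S → y ∈ π₃ S := pres_of_const hsup₃
      (Or.inl (fun S hS => ((hmT₃ S).1 hS).1))
    have p2 : ∀ S, y ∈ S → y ∈ π₂ S := pres_of_const hsup₂
      (Or.inr (fun S hS => ((hmT₂ S).1 hS).2))
    have p1 : ∀ S, y ∈ S → y ∈ π₁ S := pres_of_const hsup₁
      (Or.inl (fun S hS => ((hmT₁ S).1 hS).2))
    exact p1 _ (p2 _ (p3 _ (p4 _ hS)))
  · -- nonemptiness preservation
    intro S hS
    have p4 : ∀ S : Finset X, S.Nonempty → (π₄ S).Nonempty := pres_of_const hsup₄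
      (Or.inl (fun S hS => ((hmT₄ S).1 hS).2.2))
    have p3 : ∀ S : Finset X, S.Nonempty → (π₃ S).Nonempty := pres_of_const hsup₃
      (Or.inl (fun S hS => ⟨y, ((hmT₃ S).1 hS).1⟩))
    have p2 : ∀ S : Finset X, S.Nonempty → (π₂ S).Nonempty := pres_of_const hsup₂
      (Or.inl (fun S hS => ⟨x, ((hmT₂ S).1 hS).1⟩))
    have p1 : ∀ S : Finset X, S.Nonempty → (π₁ S).Nonempty := pres_of_const hsup₁
      (Or.inl (fun S hS => ⟨x, ((hmT₁ S).1 hS).1⟩))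
    exact p1 _ (p2 _ (p3 _ (p4 _ hS)))
  · -- the image condition
    have hpart : C' = A₁ ∪ A₂ ∪ A₃ ∪ A₄ := by
      ext S
      rw [hA₁d, hA₂d, hA₃d, hA₄d]
      simp only [Finset.mem_union, Finset.mem_filter]
      by_cases h1 : x ∈ S <;> by_cases h2 : y ∈ S <;> tauto
    have hpartC : B₁ ∪ B₂ ∪ B₃ ∪ B₄ = C := by
      ext S
      rw [hB₁d, hB₂d, hB₃d, hB₄d]
      simp only [Finset.mem_union, Finset.mem_filter]
      by_cases h1 : x ∈ S <;> by_cases h2 : y ∈ S <;> tauto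
    show (C.image τ).image ⇑(((π₄.trans π₃).trans π₂).trans π₁) = C
    rw [← hC']
    have s4 : C'.image ⇑π₄ = A₁ ∪ A₂ ∪ A₃ ∪ B₄ := by
      rw [hpart, Finset.image_union, Finset.image_union, Finset.image_union]
      rw [fiximg π₄ T₄ A₁ hsup₄ (fun S hS => fun hT =>
        ((hmT₄ S).1 hT).1 ((Finset.mem_filter.1 hS).2.1))]
      rw [fiximg π₄ T₄ A₂ hsup₄ (fun S hS => fun hT =>
        ((hmT₄ S).1 hT).1 ((Finset.mem_filter.1 hS).2.1))]
      rw [fiximg π₄ T₄ A₃ hsup₄ (fun S hS => fun hT =>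
        ((hmT₄ S).1 hT).2.1 ((Finset.mem_filter.1 hS).2.1))]
      rw [himg₄]
    have s3 : (A₁ ∪ A₂ ∪ A₃ ∪ B₄).image ⇑π₃ = A₁ ∪ A₂ ∪ B₃ ∪ B₄ := by
      rw [Finset.image_union, Finset.image_union, Finset.image_union]
      rw [fiximg π₃ T₃ A₁ hsup₃ (fun S hS => fun hT =>
        ((hmT₃ S).1 hT).2 ((Finset.mem_filter.1 hS).2.1))]
      rw [fiximg π₃ T₃ A₂ hsup₃ (fun S hS => fun hT =>
        ((Finset.mem_filter.1 hS).2.2) (((hmT₃ S).1 hT).1))]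
      rw [fiximg π₃ T₃ B₄ hsup₃ (fun S hS => fun hT =>
        ((Finset.mem_filter.1 hS).2.2) (((hmT₃ S).1 hT).1))]
      rw [himg₃]
    have s2 : (A₁ ∪ A₂ ∪ B₃ ∪ B₄).image ⇑π₂ = A₁ ∪ B₂ ∪ B₃ ∪ B₄ := by
      rw [Finset.image_union, Finset.image_union, Finset.image_union]
      rw [fiximg π₂ T₂ A₁ hsup₂ (fun S hS => fun hT =>
        ((hmT₂ S).1 hT).2 ((Finset.mem_filter.1 hS).2.2))]
      rw [fiximg π₂ T₂ B₃ hsup₂ (fun S hS => fun hT =>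
        ((Finset.mem_filter.1 hS).2.2) (((hmT₂ S).1 hT).1))]
      rw [fiximg π₂ T₂ B₄ hsup₂ (fun S hS => fun hT =>
        ((Finset.mem_filter.1 hS).2.1) (((hmT₂ S).1 hT).1))]
      rw [himg₂]
    have s1 : (A₁ ∪ B₂ ∪ B₃ ∪ B₄).image ⇑π₁ = B₁ ∪ B₂ ∪ B₃ ∪ B₄ := by
      rw [Finset.image_union, Finset.image_union, Finset.image_union]
      rw [fiximg π₁ T₁ B₂ hsup₁ (fun S hS => fun hT =>
        ((Finset.mem_filter.1 hS).2.2) (((hmT₁ S).1 hT).2))]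
      rw [fiximg π₁ T₁ B₃ hsup₁ (fun S hS => fun hT =>
        ((Finset.mem_filter.1 hS).2.2) (((hmT₁ S).1 hT).1))]
      rw [fiximg π₁ T₁ B₄ hsup₁ (fun S hS => fun hT =>
        ((Finset.mem_filter.1 hS).2.1) (((hmT₁ S).1 hT).1))]
      rw [himg₁]
    calc C'.image ⇑(((π₄.trans π₃).trans π₂).trans π₁)
        = (((C'.image ⇑π₄).image ⇑π₃).image ⇑π₂).image ⇑π₁ := by
          conv_rhs => rw [Finset.image_image, Finset.image_image, Finset.image_image]
          rfl
      _ = B₁ ∪ B₂ ∪ B₃ ∪ B₄ := by rw [s4, s3, s2, s1]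
      _ = C := hpartC

end SocRank

namespace SocRank

variable {X : Type*} [DecidableEq X]

/-- Restriction of a coalitional ranking to a sublist of its classes. -/
def restrict (r : CoalRanking X) (L : List (Finset (Finset X)))
    (h : L.Sublist r.classes) : CoalRanking X where
  classes := L
  class_nonempty := fun C hC => r.class_nonempty C (h.subset hC)
  coal_nonempty := fun C hC => r.coal_nonempty C (h.subset hC)
  classes_disjoint := r.classes_disjoint.sublist h

@[simp] lemma restrict_classes (r : CoalRanking X) (L) (h) :
    (restrict r L h).classes = L := rfl

lemma domain_def (r : CoalRanking X) : r.domain = r.classes.foldr (· ∪ ·) ∅ := rfl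

lemma cnt_split (x y : X) (C : Finset (Finset X)) :
    cnt x C = (C.filter (fun S => x ∈ S ∧ y ∈ S)).card
      + (C.filter (fun S => x ∈ S ∧ y ∉ S)).card := by
  unfold cnt
  rw [← Finset.filter_filter, ← Finset.filter_filter]
  exact (Finset.card_filter_add_card_filter_not
    (s := C.filter (fun S => x ∈ S)) (p := fun S => y ∈ S)).symm

lemma cnt_split' (x y : X) (C : Finset (Finset X)) :
    cnt y C = (C.filter (fun S => x ∈ S ∧ y ∈ S)).card
      + (C.filter (fun S => y ∈ S ∧ x ∉ S)).card := by
  rw [cnt_split y x C]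
  congr 1
  congr 1
  exact Finset.filter_congr (fun S _ => and_comm)

section Forward

variable [Fintype X] {R : SRSMap X}

/-- On the empty ranking every pair is indifferent. -/
lemma ind_empty
    (hrefl : ∀ (r : CoalRanking X) (x : X), R r x x)
    (hcomp : ∀ (r : CoalRanking X) (x y : X), R r x y ∨ R r y x)
    (hNT : NT R) (r : CoalRanking X) (hr : r.classes = [])
    (x y : X) : Ind R r x y := by
  by_cases hxy : x = y
  · subst hxy; exact ⟨hrefl r x, hrefl r x⟩
  have hmap : r.mapPerm (Equiv.swap x y) = r := by
    apply CoalRanking.ext'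
    show r.classes.map _ = r.classes
    rw [hr]; rfl
  have h1 := hNT (Equiv.swap x y) r x y
  rw [Equiv.swap_apply_left, Equiv.swap_apply_right, hmap] at h1
  rcases hcomp r x y with h | h
  · exact ⟨h, h1.2 h⟩
  · exact ⟨h1.1 h, h⟩

/-- Symmetry lemma: on a single class where `x` and `y` appear equally often,
they are indifferent. -/
lemma ind_of_sym
    (hrefl : ∀ (r : CoalRanking X) (x : X), R r x x)
    (hcomp : ∀ (r : CoalRanking X) (x y : X), R r x y ∨ R r y x)
    (hNT : NT R) (hWCA : WCA R)
    (r : CoalRanking X) (C : Finset (Finset X)) (hr : r.classes = [C])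
    (x y : X) (hcnt : cnt x C = cnt y C) : Ind R r x y := by
  by_cases hxy : x = y
  · subst hxy; exact ⟨hrefl r x, hrefl r x⟩
  have hCne : ∀ S ∈ C, S.Nonempty :=
    fun S hS => r.coal_nonempty C (by rw [hr]; exact List.mem_singleton.2 rfl) S hS
  obtain ⟨π, hπx, hπy, hπne, hπimg⟩ := exists_sym_perm hxy C hCne hcnt
  have hmap : (r.mapPerm (Equiv.swap x y)).mapCoalPerm π hπne = r := by
    apply CoalRanking.ext'
    show (r.classes.map _).map _ = r.classes
    rw [hr]
    simp only [List.map_cons, List.map_nil]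
    rw [hπimg]
  have h1 := hNT (Equiv.swap x y) r x y
  rw [Equiv.swap_apply_left, Equiv.swap_apply_right] at h1
  have hw := (hWCA x y π hπne hπx hπy (r.mapPerm (Equiv.swap x y))).2
  rw [hmap] at hw
  have key : R r x y ↔ R r y x := h1.symm.trans hw.symm
  rcases hcomp r x y with h | h
  · exact ⟨h, key.1 h⟩
  · exact ⟨key.2 h, h⟩

/-- VIP lemma for a single class: if `x` appears and `y` does not, `x` is
strictly preferred. -/
lemma pref_vip
    (hrefl : ∀ (r : CoalRanking X) (x : X), R r x x)
    (hcomp : ∀ (r : CoalRanking X) (x y : X), R r x y ∨ R r y x)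
    (hNT : NT R) (hWCA : WCA R) (hWUVIP : WUVIP R) (hCCON : CCON R)
    (r : CoalRanking X) (C : Finset (Finset X)) (hr : r.classes = [C])
    (x y : X) (hx : ∃ S ∈ C, x ∈ S) (hy : ∀ S ∈ C, y ∉ S) :
    Pref R r x y := by
  obtain ⟨S₀, hS₀, hxS₀⟩ := hx
  have hxy : x ≠ y := fun h => hy S₀ hS₀ (h ▸ hxS₀)
  set T : Finset X := {x, y} with hTd
  have hxT : x ∈ T := by simp [hTd]
  have hyT : y ∈ T := by simp [hTd]
  have hTC : T ∉ C := fun h => hy T h hyT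
  have hCne : C.Nonempty := ⟨S₀, hS₀⟩
  have hCcoal : ∀ S ∈ C, S.Nonempty :=
    fun S hS => r.coal_nonempty C (by rw [hr]; exact List.mem_singleton.2 rfl) S hS
  refine ?_
  set r₂ : CoalRanking X :=
    ⟨[{T}], by intro D hD; rw [List.mem_singleton] at hD; subst hD; exact ⟨T, Finset.mem_singleton_self T⟩,
      by intro D hD S hS; rw [List.mem_singleton] at hD; subst hD;
         rw [Finset.mem_singleton] at hS; subst hS; exact ⟨x, hxT⟩,
      List.pairwise_singleton _ _⟩ with hr₂d
  set rc : CoalRanking X :=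
    ⟨[C, {T}],
      by intro D hD; rcases List.mem_cons.1 hD with rfl | hD
         · exact hCne
         · rw [List.mem_singleton] at hD; subst hD; exact ⟨T, Finset.mem_singleton_self T⟩,
      by intro D hD S hS; rcases List.mem_cons.1 hD with rfl | hD
         · exact hCcoal S hS
         · rw [List.mem_singleton] at hD; subst hD;
           rw [Finset.mem_singleton] at hS; subst hS; exact ⟨x, hxT⟩,
      by refine List.pairwise_cons.2 ⟨?_, List.pairwise_singleton _ _⟩
         intro D hD; rw [List.mem_singleton] at hD; subst hD
         exact Finset.disjoint_singleton_right.2 hTC⟩ with hrcd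
  have hsum : CoalRanking.IsConcatSum rc r r₂ := by
    constructor
    · rw [domain_def, domain_def, hr]
      show Disjoint (C ∪ ∅) _
      show Disjoint (C ∪ ∅) ({T} ∪ ∅)
      simp only [Finset.union_empty]
      exact Finset.disjoint_singleton_right.2 hTC
    · show rc.classes = r.classes ++ r₂.classes
      rw [hr]; rfl
  have hpref_c : Pref R rc x y :=
    hWUVIP rc C {T} rfl x y ⟨S₀, hS₀, hxS₀⟩ hy
  have hind₂ : Ind R r₂ x y := by
    apply ind_of_sym hrefl hcomp hNT hWCA r₂ {T} rfl
    simp [cnt, Finset.filter_singleton, hxT, hyT]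
  have hcons := hCCON r r₂ rc hsum
  have hnyx : ¬ R r y x := by
    intro hyx
    by_cases hxy2 : R r x y
    · exact hpref_c.2 (((hcons x y).1 ⟨hxy2, hyx⟩ hind₂).2)
    · have : Pref R rc y x :=
        (hcons y x).2.2.1 ⟨hyx, hxy2⟩ ⟨hind₂.2, hind₂.1⟩
      exact this.2 hpref_c.1
  exact ⟨(hcomp r x y).resolve_right hnyx, hnyx⟩

/-- Single-class strictness: if `x` appears strictly more often than `y` in the
unique class, `x` is strictly preferred. -/
lemma pref_single
    (hrefl : ∀ (r : CoalRanking X) (x : X), R r x x)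
    (hcomp : ∀ (r : CoalRanking X) (x y : X), R r x y ∨ R r y x)
    (hNT : NT R) (hWCA : WCA R) (hWUVIP : WUVIP R) (hCCON : CCON R)
    (hTCON : TCON R)
    (r : CoalRanking X) (C : Finset (Finset X)) (hr : r.classes = [C])
    (x y : X) (hcnt : cnt y C < cnt x C) : Pref R r x y := by
  have hCcoal : ∀ S ∈ C, S.Nonempty :=
    fun S hS => r.coal_nonempty C (by rw [hr]; exact List.mem_singleton.2 rfl) S hS
  set Bx := C.filter (fun S => x ∈ S ∧ y ∉ S) with hBxd
  set By := C.filter (fun S => y ∈ S ∧ x ∉ S) with hByd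
  have hsplit1 := cnt_split x y C
  have hsplit2 := cnt_split' x y C
  have hcards : By.card < Bx.card := by
    rw [← hBxd] at hsplit1
    rw [← hByd] at hsplit2
    omega
  obtain ⟨B, hBsub, hBcard⟩ := Finset.exists_subset_card_eq (s := Bx) (n := Bx.card - By.card)
    (by omega)
  have hBne : B.Nonempty := Finset.card_pos.1 (by omega)
  have hBC : B ⊆ C := hBsub.trans (Finset.filter_subset _ _)
  have hmemB : ∀ S ∈ B, x ∈ S ∧ y ∉ S :=
    fun S hS => (Finset.mem_filter.1 (hBsub hS)).2
  set A := C \ B with hAd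
  have hAunion : A ∪ B = C := Finset.sdiff_union_of_subset hBC
  have hABdisj : Disjoint A B := Finset.sdiff_disjoint
  -- counts in A agree
  have hfA1 : A.filter (fun S => x ∈ S ∧ y ∈ S) = C.filter (fun S => x ∈ S ∧ y ∈ S) := by
    ext S
    simp only [hAd, Finset.mem_filter, Finset.mem_sdiff]
    constructor
    · rintro ⟨⟨h1, _⟩, h2⟩; exact ⟨h1, h2⟩
    · rintro ⟨h1, h2⟩
      exact ⟨⟨h1, fun hB => (hmemB S hB).2 h2.2⟩, h2⟩
  have hfA2 : A.filter (fun S => y ∈ S ∧ x ∉ S) = By := by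
    ext S
    simp only [hAd, hByd, Finset.mem_filter, Finset.mem_sdiff]
    constructor
    · rintro ⟨⟨h1, _⟩, h2⟩; exact ⟨h1, h2⟩
    · rintro ⟨h1, h2⟩
      exact ⟨⟨h1, fun hB => h2.2 (hmemB S hB).1⟩, h2⟩
  have hfA3 : A.filter (fun S => x ∈ S ∧ y ∉ S) = Bx \ B := by
    ext S
    simp only [hAd, hBxd, Finset.mem_filter, Finset.mem_sdiff]
    tauto
  have hcntA : cnt x A = cnt y A := by
    rw [cnt_split x y A, cnt_split' x y A, hfA2, hfA3]
    have : (Bx \ B).card = Bx.card - B.card := Finset.card_sdiff_of_subset hBsub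
    omega
  -- the strict part
  have hxB : ∃ S ∈ B, x ∈ S := by
    obtain ⟨S, hS⟩ := hBne
    exact ⟨S, hS, (hmemB S hS).1⟩
  have hyB : ∀ S ∈ B, y ∉ S := fun S hS => (hmemB S hS).2
  by_cases hA : A = ∅
  · -- C = B, single class VIP
    have hCB : C = B := by
      rw [← hAunion, hA, Finset.empty_union]
    apply pref_vip hrefl hcomp hNT hWCA hWUVIP hCCON r C hr
    · exact hCB ▸ hxB
    · exact hCB ▸ hyB
  · have hAne : A.Nonempty := Finset.nonempty_iff_ne_empty.2 hA
    set rA : CoalRanking X :=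
      ⟨[A], by intro D hD; rw [List.mem_singleton] at hD; subst hD; exact hAne,
        by intro D hD S hS; rw [List.mem_singleton] at hD; subst hD
           exact hCcoal S (Finset.mem_sdiff.1 hS).1,
        List.pairwise_singleton _ _⟩ with hrAd
    set rB : CoalRanking X :=
      ⟨[B], by intro D hD; rw [List.mem_singleton] at hD; subst hD; exact hBne,
        by intro D hD S hS; rw [List.mem_singleton] at hD; subst hD
           exact hCcoal S (hBC hS),
        List.pairwise_singleton _ _⟩ with hrBd
    have hIndA : Ind R rA x y :=
      ind_of_sym hrefl hcomp hNT hWCA rA A rfl x y hcntA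
    have hPrefB : Pref R rB x y :=
      pref_vip hrefl hcomp hNT hWCA hWUVIP hCCON rB B rfl x y hxB hyB
    have hsum : CoalRanking.IsTopAlignedSum r rA rB := by
      constructor
      · rw [domain_def, domain_def]
        show Disjoint (A ∪ ∅) (B ∪ ∅)
        simpa using hABdisj
      · show r.classes = CoalRanking.zipUnion [A] [B]
        rw [hr]
        show [C] = [A ∪ B]
        rw [hAunion]
    exact (hTCON rA rB r hsum x y).2.1 hIndA hPrefB

/-- Indifference for equal theta vectors. -/
lemma ind_all
    (hrefl : ∀ (r : CoalRanking X) (x : X), R r x x)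
    (hcomp : ∀ (r : CoalRanking X) (x y : X), R r x y ∨ R r y x)
    (hNT : NT R) (hWCA : WCA R) (hCCON : CCON R) :
    ∀ (L : List (Finset (Finset X))) (r : CoalRanking X), r.classes = L →
    ∀ (x y : X), (∀ C ∈ L, cnt x C = cnt y C) → Ind R r x y := by
  intro L
  induction L with
  | nil => exact fun r hr x y _ => ind_empty hrefl hcomp hNT r hr x y
  | cons C L ih =>
    intro r hr x y hcnt
    have hsubC : [C].Sublist r.classes := by
      rw [hr]
      exact (List.nil_sublist L).cons₂ C
    have hsubL : L.Sublist r.classes := by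
      rw [hr]
      exact List.sublist_cons_self C L
    set r₁ := restrict r [C] hsubC with hr₁d
    set r₂ := restrict r L hsubL with hr₂d
    have hsum : CoalRanking.IsConcatSum r r₁ r₂ := by
      constructor
      · rw [domain_def, domain_def, restrict_classes, restrict_classes]
        apply disjoint_foldr_union
        intro C' hC' D hD
        rw [List.mem_singleton] at hC'
        subst hC'
        have hpw := r.classes_disjoint
        rw [hr] at hpw
        exact (List.pairwise_cons.1 hpw).1 D hD
      · rw [hr]; rfl
    have h1 : Ind R r₁ x y :=
      ind_of_sym hrefl hcomp hNT hWCA r₁ C rfl x y (hcnt C List.mem_cons_self)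
    have h2 : Ind R r₂ x y :=
      ih r₂ rfl x y (fun D hD => hcnt D (List.mem_cons_of_mem C hD))
    exact (hCCON r₁ r₂ r hsum x y).1 h1 h2

/-- Extension downwards with IAWS. -/
lemma extend_worst (hIAWS : IAWS R) :
    ∀ (M : List (Finset (Finset X))) (r : CoalRanking X)
      (L : List (Finset (Finset X))) (hsub : L.Sublist r.classes)
      (h : r.classes = L ++ M) (x y : X),
      Pref R (restrict r L hsub) x y → Pref R r x y := by
  intro M
  induction M with
  | nil =>
    intro r L hsub h x y hP
    have : restrict r L hsub = r := CoalRanking.ext' (by rw [restrict_classes, h, List.append_nil])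
    rwa [this] at hP
  | cons G M ih =>
    intro r L hsub h x y hP
    have hsub' : (L ++ [G]).Sublist r.classes := by
      rw [h]
      have : (L ++ [G]) ++ M = L ++ G :: M := by simp
      rw [← this]
      exact List.sublist_append_left _ _
    have hstep : Pref R (restrict r (L ++ [G]) hsub') x y := by
      apply hIAWS (restrict r L hsub) (restrict r (L ++ [G]) hsub') G
      · rw [restrict_classes, restrict_classes]
      · intro S hS hdom
        rw [domain_def, restrict_classes] at hdom
        obtain ⟨D, hD, hSD⟩ := mem_foldr_union.1 hdom
        have hpw := r.classes_disjoint
        rw [h] at hpw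
        have := (List.pairwise_append.1 hpw).2.2 D hD G List.mem_cons_self
        exact Finset.disjoint_left.1 this hSD hS
      · exact hP
    exact ih r (L ++ [G]) hsub' (by rw [h]; simp) x y hstep

/-- Strict preference for lexicographically dominating theta vectors. -/
lemma pref_all
    (hrefl : ∀ (r : CoalRanking X) (x : X), R r x x)
    (hcomp : ∀ (r : CoalRanking X) (x y : X), R r x y ∨ R r y x)
    (hNT : NT R) (hWCA : WCA R) (hWUVIP : WUVIP R) (hCCON : CCON R)
    (hTCON : TCON R) (hIAWS : IAWS R)
    (r : CoalRanking X) (x y : X) (h : sLex (theta r x) (theta r y)) :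
    Pref R r x y := by
  obtain ⟨L₁, C, L₂, hdec, hpre, hC⟩ := sLex_map_decomp (cnt x) (cnt y) r.classes h
  have hsubMid : (L₁ ++ [C]).Sublist r.classes := by
    rw [hdec]
    have : (L₁ ++ [C]) ++ L₂ = L₁ ++ C :: L₂ := by simp
    rw [← this]
    exact List.sublist_append_left _ _
  set rMid := restrict r (L₁ ++ [C]) hsubMid with hrMidd
  have hsubPre : L₁.Sublist rMid.classes := by
    rw [restrict_classes]
    exact List.sublist_append_left _ _
  have hsubC : [C].Sublist rMid.classes := by
    rw [restrict_classes]
    exact List.sublist_append_right _ _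
  set rPre := restrict rMid L₁ hsubPre with hrPred
  set rC := restrict rMid [C] hsubC with hrCd
  have hpwMid := rMid.classes_disjoint
  rw [restrict_classes] at hpwMid
  have hsumMid : CoalRanking.IsConcatSum rMid rPre rC := by
    constructor
    · rw [domain_def, domain_def, restrict_classes, restrict_classes]
      apply disjoint_foldr_union
      intro D hD E hE
      rw [List.mem_singleton] at hE
      rw [hE]
      exact (List.pairwise_append.1 hpwMid).2.2 D hD C (List.mem_singleton.2 rfl)
    · rw [restrict_classes]; rfl
  have hIndPre : Ind R rPre x y :=
    ind_all hrefl hcomp hNT hWCA hCCON L₁ rPre rfl x y hpre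
  have hPrefC : Pref R rC x y :=
    pref_single hrefl hcomp hNT hWCA hWUVIP hCCON hTCON rC C rfl x y hC
  have hPrefMid : Pref R rMid x y :=
    (hCCON rPre rC rMid hsumMid x y).2.1 hIndPre hPrefC
  exact extend_worst hIAWS L₂ r (L₁ ++ [C]) hsubMid (by rw [hdec]; simp) x y hPrefMid

end Forward

end SocRank

namespace SocRank

section Backward

variable {X : Type*} [DecidableEq X]

lemma sLex_append_left (c : List ℕ) {a b : List ℕ} (h : sLex a b) :
    sLex (c ++ a) (c ++ b) :=
  ⟨(lexGE_append_left c a b).2 h.1, fun he => h.2 (List.append_cancel_left he)⟩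

lemma nt_lexcel : NT (lexcel (X := X)) := by
  intro σ r x y
  unfold lexcel
  rw [theta_mapPerm σ r x, theta_mapPerm σ r y]

lemma wca_lexcel [Fintype X] : WCA (lexcel (X := X)) := by
  intro x y π hπ hx hy r
  have hmx := perm_mem_iff_of_forall π hx
  have hmy := perm_mem_iff_of_forall π hy
  constructor <;>
    (unfold lexcel; rw [theta_mapCoalPerm π hπ hmx r, theta_mapCoalPerm π hπ hmy r])

lemma wuvip_lexcel : WUVIP (lexcel (X := X)) := by
  intro r A B hr x y hx hy
  rw [lexcel_pref_iff]
  have hx' : theta r x = [cnt x A, cnt x B] := by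
    show r.classes.map _ = _
    rw [hr]; rfl
  have hy' : theta r y = [cnt y A, cnt y B] := by
    show r.classes.map _ = _
    rw [hr]; rfl
  rw [hx', hy']
  have h0 : cnt y A = 0 := cnt_eq_zero hy
  have h1 : 0 < cnt x A := cnt_pos hx
  refine ⟨Or.inl (by omega), fun he => ?_⟩
  have : cnt x A = cnt y A := by injection he
  omega

lemma ccon_lexcel : CCON (lexcel (X := X)) := by
  intro r₁ r₂ r hsum x y
  have hx := theta_of_concat hsum x
  have hy := theta_of_concat hsum y
  have l₁ := theta_len_eq r₁ x y
  refine ⟨?_, ?_, ?_, ?_⟩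
  · intro h1 h2
    rw [lexcel_ind_iff] at h1 h2 ⊢
    rw [hx, hy, h1, h2]
  · intro h1 h2
    rw [lexcel_ind_iff] at h1
    rw [lexcel_pref_iff] at h2 ⊢
    rw [hx, hy, h1]
    exact sLex_append_left _ h2
  · intro h1 h2
    rw [lexcel_pref_iff] at h1 ⊢
    rw [hx, hy]
    exact sLex_append _ _ l₁ h1
  · intro h1 h2
    rw [lexcel_pref_iff] at h1 ⊢
    rw [hx, hy]
    exact sLex_append _ _ l₁ h1

lemma tcon_lexcel : TCON (lexcel (X := X)) := by
  intro r₁ r₂ r hsum x y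
  have hx := theta_of_topAligned hsum x
  have hy := theta_of_topAligned hsum y
  have l₁ := theta_len_eq r₁ x y
  have l₂ := theta_len_eq r₂ x y
  have key : ∀ {p q u v : List ℕ}, p.length = q.length → u.length = v.length →
      lexGE p q → lexGE u v → (p ≠ q ∨ u ≠ v) →
      sLex (padAdd p u) (padAdd q v) := by
    intro p q u v hpq huv h1 h2 hne
    refine ⟨padAdd_lexGE hpq huv h1 h2, fun he => ?_⟩
    obtain ⟨e1, e2⟩ := padAdd_eq_split hpq huv h1 h2 he
    rcases hne with hne | hne
    · exact hne e1
    · exact hne e2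
  refine ⟨?_, ?_, ?_, ?_⟩
  · intro h1 h2
    rw [lexcel_ind_iff] at h1 h2 ⊢
    rw [hx, hy, h1, h2]
  · intro h1 h2
    rw [lexcel_ind_iff] at h1
    rw [lexcel_pref_iff] at h2 ⊢
    rw [hx, hy]
    exact key l₁ l₂ (by rw [h1]; exact lexGE_refl _) h2.1 (Or.inr h2.2)
  · intro h1 h2
    rw [lexcel_ind_iff] at h2
    rw [lexcel_pref_iff] at h1 ⊢
    rw [hx, hy]
    exact key l₁ l₂ h1.1 (by rw [h2]; exact lexGE_refl _) (Or.inl h1.2)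
  · intro h1 h2
    rw [lexcel_pref_iff] at h1 h2 ⊢
    rw [hx, hy]
    exact key l₁ l₂ h1.1 h2.1 (Or.inl h1.2)

lemma iaws_lexcel : IAWS (lexcel (X := X)) := by
  intro r r' G hcl hG x y h
  rw [lexcel_pref_iff] at h ⊢
  have hx : theta r' x = theta r x ++ [cnt x G] := by
    show r'.classes.map _ = _
    rw [hcl, List.map_append]
    rfl
  have hy : theta r' y = theta r y ++ [cnt y G] := by
    show r'.classes.map _ = _
    rw [hcl, List.map_append]
    rfl
  rw [hx, hy]
  exact sLex_append _ _ (theta_len_eq r x y) h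

end Backward

end SocRank

/-- an SRS satisfies NT, WCA, WUVIP, CCON, TCON and IAWS iff it is
the lex-cel. -/
theorem lexcel_characterization {X : Type*} [DecidableEq X] [Fintype X]
    (hX : 3 ≤ Fintype.card X) (R : SRSMap X)
    (hrefl : ∀ (r : CoalRanking X) (x : X), R r x x)
    (hcomp : ∀ (r : CoalRanking X) (x y : X), R r x y ∨ R r y x) :
    (NT R ∧ WCA R ∧ WUVIP R ∧ CCON R ∧ TCON R ∧ IAWS R) ↔ R = lexcel := by
  constructor
  · rintro ⟨hNT, hWCA, hWUVIP, hCCON, hTCON, hIAWS⟩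
    funext r x y
    apply propext
    rcases lex_trichotomy (theta_len_eq r x y) with he | hs | hs
    · have hR : Ind R r x y := by
        apply ind_all hrefl hcomp hNT hWCA hCCON r.classes r rfl x y
        intro C hC
        exact List.map_inj_left.1 he C hC
      constructor
      · intro _
        show lexGE (theta r x) (theta r y)
        rw [he]
        exact lexGE_refl _
      · intro _
        exact hR.1
    · have hR := pref_all hrefl hcomp hNT hWCA hWUVIP hCCON hTCON hIAWS r x y hs
      exact ⟨fun _ => hs.1, fun _ => hR.1⟩
    · have hR := pref_all hrefl hcomp hNT hWCA hWUVIP hCCON hTCON hIAWS r y x hs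
      have hnot : ¬ lexcel r x y := (not_lexGE_iff (theta_len_eq r y x)).2 hs
      exact ⟨fun h => absurd h hR.2, fun h => absurd h hnot⟩
  · rintro rfl
    exact ⟨nt_lexcel, wca_lexcel, wuvip_lexcel, ccon_lexcel, tcon_lexcel, iaws_lexcel⟩
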